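/- Matrix determinant asymptotic: let M(s) be an n×n positive definite Hermitian matrix of the form M(s) = D(s) + B where D(s) = diag(s₁^(−1), …, s_d^(−1), 1, …, 1) with s_i > 0, and B is a Hermitian matrix with ‖B‖ ≤ K. Then there are constants c, C > 0 depending only on n and K such that for all sufficiently small max s_i, the (k,k)-entry of the inverse satisfies c·s_k ≤ (M(s)^(−1))_{kk} ≤ C·s_k for 1 ≤ k ≤ d, provided additionally the lower-right block of M(s) is positive definite with determinant bounded below by a constant δ > 0. -/

import Mathlib

open Matrix
open scoped ComplexOrder

lemma det_norm_le {p : ℕ} (A : Matrix (Fin p) (Fin p) ℂ) (b : ℝ)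
    (h : ∀ i j, ‖A i j‖ ≤ b) : ‖A.det‖ ≤ p.factorial * b ^ p := by
  rw [Matrix.det_apply']
  calc ‖∑ σ : Equiv.Perm (Fin p), Equiv.Perm.sign σ * ∏ i, A (σ i) i‖
      ≤ ∑ σ : Equiv.Perm (Fin p), ‖(Equiv.Perm.sign σ : ℂ) * ∏ i, A (σ i) i‖ :=
        norm_sum_le _ _
    _ ≤ ∑ _σ : Equiv.Perm (Fin p), b ^ p := by
        refine Finset.sum_le_sum fun σ _ => ?_
        rw [norm_mul]
        have h1 : ‖((Equiv.Perm.sign σ : ℤ) : ℂ)‖ = 1 := by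
          rcases Int.units_eq_one_or (Equiv.Perm.sign σ) with hs | hs <;> simp [hs]
        rw [h1, one_mul]
        calc ‖∏ i, A (σ i) i‖ = ∏ i, ‖A (σ i) i‖ := norm_prod _ _
          _ ≤ ∏ _i : Fin p, b := Finset.prod_le_prod (fun _ _ => norm_nonneg _)
              (fun i _ => h _ _)
          _ = b ^ p := by simp
    _ = p.factorial * b ^ p := by
        rw [Finset.sum_const, nsmul_eq_mul]
        congr 1
        simp [Fintype.card_perm]

lemma quad_bound {p : ℕ} (B : Matrix (Fin p) (Fin p) ℂ) (K : ℝ) (hK : 0 ≤ K)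
    (hB : ∀ i j, ‖B i j‖ ≤ K) (x : Fin p → ℂ) :
    ‖star x ⬝ᵥ (B *ᵥ x)‖ ≤ K * p * ∑ i, ‖x i‖ ^ 2 := by
  have h1 : ‖star x ⬝ᵥ (B *ᵥ x)‖ ≤ K * (∑ i, ‖x i‖) ^ 2 := by
    calc ‖∑ i, star (x i) * (∑ j, B i j * x j)‖
        ≤ ∑ i, ‖star (x i) * (∑ j, B i j * x j)‖ := norm_sum_le _ _
      _ ≤ ∑ i, ‖x i‖ * (K * ∑ j, ‖x j‖) := by
          refine Finset.sum_le_sum fun i _ => ?_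
          rw [norm_mul, norm_star]
          refine mul_le_mul_of_nonneg_left ?_ (norm_nonneg _)
          calc ‖∑ j, B i j * x j‖ ≤ ∑ j, ‖B i j * x j‖ := norm_sum_le _ _
            _ ≤ ∑ j, K * ‖x j‖ := Finset.sum_le_sum fun j _ => by
                rw [norm_mul]
                exact mul_le_mul_of_nonneg_right (hB i j) (norm_nonneg _)
            _ = K * ∑ j, ‖x j‖ := by rw [Finset.mul_sum]
      _ = K * (∑ i, ‖x i‖) ^ 2 := by
          rw [← Finset.sum_mul]; ring
  refine h1.trans ?_
  rw [mul_assoc]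
  refine mul_le_mul_of_nonneg_left ?_ hK
  have := sq_sum_le_card_mul_sum_sq (s := (Finset.univ : Finset (Fin p)))
    (f := fun i => ‖x i‖)
  simpa using this

set_option maxHeartbeats 1000000 in
/-- Inverse diagonal entry asymptotics: for `M(s) = D(s) + B` with
`D(s) = diag(s₁⁻¹,…,s_d⁻¹,1,…,1)`, `B` Hermitian with entries bounded by `K`,
`M(s)` positive definite and trailing block determinant bounded below by `δ`,
the diagonal entries of the inverse satisfy `c s_k ≤ (M(s)⁻¹)_{kk} ≤ C' s_k`. -/
theorem stmt5 (d m : ℕ) (hd : 1 ≤ d) (K δ : ℝ) (hK : 0 < K) (hδ : 0 < δ) :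
    ∃ c C' s₀ : ℝ, 0 < c ∧ 0 < C' ∧ 0 < s₀ ∧
      ∀ (s : Fin d → ℝ) (B : Matrix (Fin (d + m)) (Fin (d + m)) ℂ),
        (∀ i, 0 < s i ∧ s i < 1) → (∀ i, s i ≤ s₀) →
        B.IsHermitian → (∀ i j, ‖B i j‖ ≤ K) →
        let D : Matrix (Fin (d + m)) (Fin (d + m)) ℂ :=
          Matrix.diagonal (fun i =>
            if h : (i : ℕ) < d then ((s ⟨i, h⟩)⁻¹ : ℂ) else 1)
        (D + B).PosDef →
        δ ≤ (((D + B).submatrix (Fin.natAdd d) (Fin.natAdd d)).det).re →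
        ∀ k : Fin d,
          c * s k ≤ (((D + B)⁻¹) (Fin.castAdd m k) (Fin.castAdd m k)).re ∧
          (((D + B)⁻¹) (Fin.castAdd m k) (Fin.castAdd m k)).re ≤ C' * s k := by
  classical
  have hK' : (0:ℝ) ≤ K := hK.le
  set α : ℝ := m.factorial * (1+K)^m with hαdef
  have hαpos : 0 < α := by positivity
  set ρ : ℝ := m * (α/δ) * K with hρdef
  have hρ0 : 0 ≤ ρ := by positivity
  set R : ℝ := d * m * ρ^2 with hRdef
  have hR0 : 0 ≤ R := by positivity
  set γ : ℝ := ((d:ℝ)+m)*K*(1+R) with hγdef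
  have hγ0 : 0 ≤ γ := by positivity
  set C' : ℝ := 1 + γ with hC'def
  have hC'pos : 0 < C' := by positivity
  set s₀ : ℝ := (1 + K + γ)⁻¹ with hs₀def
  have hbase : (0:ℝ) < 1 + K + γ := by positivity
  have hs₀pos : 0 < s₀ := by rw [hs₀def]; positivity
  have hs₀inv : s₀⁻¹ = 1 + K + γ := by rw [hs₀def, inv_inv]
  have hpart : (0:ℝ) ≤ ((d:ℝ)+m)*K*(1+R) := by positivity
  refine ⟨1/2, C', s₀, by norm_num, hC'pos, hs₀pos, ?_⟩
  intro s B hs hss hB hBK D hPD hdetC k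
  set dv : Fin (d+m) → ℂ := fun i => if h : (i : ℕ) < d then ((s ⟨i, h⟩)⁻¹ : ℂ) else 1 with hdvdef
  have hD : D = Matrix.diagonal dv := rfl
  set M : Matrix (Fin (d+m)) (Fin (d+m)) ℂ := D + B with hMdef
  have hMH : M.IsHermitian := hPD.1
  have hdetM : IsUnit M.det := hPD.det_pos.ne'.isUnit
  set kk : Fin (d+m) := Fin.castAdd m k with hkkdef
  set dr : Fin (d+m) → ℝ := fun i => if h : (i : ℕ) < d then (s ⟨i, h⟩)⁻¹ else 1 with hdrdef
  have hdv_dr : ∀ i, dv i = ((dr i : ℝ) : ℂ) := by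
    intro i
    simp only [hdvdef, hdrdef]
    split_ifs with h <;> simp
  have hdr_nonneg : ∀ i, 0 ≤ dr i := by
    intro i
    simp only [hdrdef]
    split_ifs with h
    · exact (inv_pos.mpr (hs ⟨i, h⟩).1).le
    · norm_num
  have hdr_lead : ∀ l : Fin d, dr (Fin.castAdd m l) = (s l)⁻¹ := by
    intro l
    simp only [hdrdef]
    rw [dif_pos (show ((Fin.castAdd m l : Fin (d+m)) : ℕ) < d by simpa using l.2)]
    congr 1
  have hdr_kk : dr kk = (s k)⁻¹ := hdr_lead k
  have hsinv : ∀ l : Fin d, s₀⁻¹ ≤ (s l)⁻¹ := fun l => inv_anti₀ (hs l).1 (hss l)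
  have hsk_pos : 0 < s k := (hs k).1
  set x : Fin (d+m) → ℂ := M⁻¹ *ᵥ Pi.single kk 1 with hxdef
  have hMx : M *ᵥ x = Pi.single kk 1 := by
    rw [hxdef, mulVec_mulVec, Matrix.mul_nonsing_inv _ hdetM, one_mulVec]
  have hxkk : x kk = M⁻¹ kk kk := by simp [hxdef]
  set t : ℝ := ((M⁻¹) kk kk).re with htdef
  have hx0 : x ≠ 0 := by
    intro h
    have h2 := congrFun hMx kk
    rw [h] at h2
    simp [Matrix.mulVec_zero] at h2
  have hQre : (star x ⬝ᵥ (M *ᵥ x)).re = t := by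
    rw [hMx, dotProduct_single, mul_one]
    simp [htdef, ← hxkk]
  have ht_pos : 0 < t := by
    have h1 := hPD.re_dotProduct_pos hx0
    rw [← hQre]
    simpa using h1
  have hDquad : (star x ⬝ᵥ (D *ᵥ x)) = ((∑ i, dr i * ‖x i‖^2 : ℝ) : ℂ) := by
    rw [hD]
    push_cast
    rw [dotProduct]
    refine Finset.sum_congr rfl fun i _ => ?_
    rw [mulVec_diagonal, hdv_dr]
    calc star (x i) * ((dr i : ℂ) * x i) = (dr i : ℂ) * (x i * star (x i)) := by ring
      _ = (dr i : ℂ) * (‖x i‖:ℂ)^2 := by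
          rw [Complex.star_def, Complex.mul_conj']
  set rB : ℝ := (star x ⬝ᵥ (B *ᵥ x)).re with hrBdef
  set N : ℝ := ∑ i, ‖x i‖^2 with hNdef
  have hN_nonneg : 0 ≤ N := Finset.sum_nonneg fun i _ => by positivity
  have hrB : |rB| ≤ K * ((d:ℝ)+m) * N := by
    have h1 : |rB| ≤ K * ((d+m : ℕ) : ℝ) * N := by
      refine (Complex.abs_re_le_norm _).trans ?_
      simpa [hNdef] using quad_bound B K hK' hBK x
    rwa [Nat.cast_add] at h1
  have ht_eq : t = (∑ i, dr i * ‖x i‖^2) + rB := by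
    rw [← hQre, hMdef, add_mulVec, dotProduct_add, Complex.add_re, hDquad, Complex.ofReal_re,
      hrBdef]
  set Nt : ℝ := ∑ l : Fin d, ‖x (Fin.castAdd m l)‖^2 with hNtdef
  set N' : ℝ := ∑ j : Fin m, ‖x (Fin.natAdd d j)‖^2 with hN'def
  have hNt_nonneg : 0 ≤ Nt := Finset.sum_nonneg fun i _ => by positivity
  have hN'_nonneg : 0 ≤ N' := Finset.sum_nonneg fun i _ => by positivity
  have hNsplit : N = Nt + N' := by
    rw [hNdef, Fin.sum_univ_add]
  have hE1 : s₀⁻¹ * Nt ≤ ∑ i, dr i * ‖x i‖^2 := by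
    rw [Fin.sum_univ_add (f := fun i => dr i * ‖x i‖^2)]
    have h1 : s₀⁻¹ * Nt ≤ ∑ l : Fin d, dr (Fin.castAdd m l) * ‖x (Fin.castAdd m l)‖^2 := by
      rw [hNtdef, Finset.mul_sum]
      refine Finset.sum_le_sum fun l _ => ?_
      rw [hdr_lead l]
      exact mul_le_mul_of_nonneg_right (hsinv l) (by positivity)
    have h2 : 0 ≤ ∑ j : Fin m, dr (Fin.natAdd d j) * ‖x (Fin.natAdd d j)‖^2 :=
      Finset.sum_nonneg fun j _ => mul_nonneg (hdr_nonneg _) (by positivity)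
    linarith only [h1, h2]
  have hE2 : (s k)⁻¹ * t^2 ≤ ∑ i, dr i * ‖x i‖^2 := by
    have h1 : (s k)⁻¹ * t^2 ≤ dr kk * ‖x kk‖^2 := by
      rw [hdr_kk]
      refine mul_le_mul_of_nonneg_left ?_ (by positivity)
      have h2 : t^2 ≤ Complex.normSq (x kk) := by
        rw [hxkk, Complex.normSq_apply, htdef, pow_two]
        linarith only [mul_self_nonneg ((M⁻¹ : Matrix (Fin (d+m)) (Fin (d+m)) ℂ) kk kk).im]
      calc t^2 ≤ Complex.normSq (x kk) := h2
        _ = ‖x kk‖^2 := by rw [Complex.normSq_eq_norm_sq]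
    refine h1.trans ?_
    exact Finset.single_le_sum (f := fun i => dr i * ‖x i‖^2)
      (fun i _ => mul_nonneg (hdr_nonneg i) (by positivity)) (Finset.mem_univ kk)
  -- trailing block
  set Cm : Matrix (Fin m) (Fin m) ℂ := M.submatrix (Fin.natAdd d) (Fin.natAdd d) with hCdef
  have hCdet_re : δ ≤ Cm.det.re := hdetC
  have hCdet0 : Cm.det ≠ 0 := by
    intro h
    rw [h] at hCdet_re
    simp at hCdet_re
    linarith only [hδ, hCdet_re]
  have hCunit : IsUnit Cm.det := isUnit_iff_ne_zero.mpr hCdet0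
  have hCentry : ∀ i j : Fin m, ‖Cm i j‖ ≤ 1 + K := by
    intro i j
    rw [hCdef, submatrix_apply, hMdef]
    calc ‖(D + B) (Fin.natAdd d i) (Fin.natAdd d j)‖
        ≤ ‖D (Fin.natAdd d i) (Fin.natAdd d j)‖ + ‖B (Fin.natAdd d i) (Fin.natAdd d j)‖ :=
          norm_add_le _ _
      _ ≤ 1 + K := by
          refine add_le_add ?_ (hBK _ _)
          rw [hD]
          rcases eq_or_ne (Fin.natAdd d i) (Fin.natAdd d j) with h | h
          · rw [h, Matrix.diagonal_apply_eq]
            have h3 : dv (Fin.natAdd d j) = 1 := by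
              simp only [hdvdef]
              rw [dif_neg (by simp)]
            rw [h3]; norm_num
          · rw [Matrix.diagonal_apply_ne _ h]; norm_num
  have hCinv_entry : ∀ i j : Fin m, ‖Cm⁻¹ i j‖ ≤ α / δ := by
    intro i j
    rw [Matrix.inv_def, Matrix.smul_apply, norm_smul, Ring.inverse_eq_inv, norm_inv]
    have hadj : ‖Cm.adjugate i j‖ ≤ α := by
      rw [Matrix.adjugate_apply, hαdef]
      refine det_norm_le _ _ fun a b => ?_
      rw [Matrix.updateRow_apply]
      split_ifs with h
      · rw [Pi.single_apply]
        split_ifs <;> simp <;> linarith only [hK]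
      · exact hCentry a b
    have hdet_lb : δ ≤ ‖Cm.det‖ := by
      refine hCdet_re.trans ?_
      exact Complex.re_le_norm _
    calc ‖Cm.det‖⁻¹ * ‖Cm.adjugate i j‖ ≤ δ⁻¹ * α := by
          refine mul_le_mul ?_ hadj (norm_nonneg _) (by positivity)
          exact inv_anti₀ hδ hdet_lb
      _ = α / δ := by rw [div_eq_inv_mul]
  set x' : Fin m → ℂ := fun j => x (Fin.natAdd d j) with hx'def
  set w : Fin m → ℂ :=
    fun j => ∑ l : Fin d, B (Fin.natAdd d j) (Fin.castAdd m l) * x (Fin.castAdd m l) with hwdef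
  have hne : ∀ (j : Fin m) (l : Fin d), (Fin.natAdd d j : Fin (d+m)) ≠ Fin.castAdd m l := by
    intro j l h
    have h2 := congrArg Fin.val h
    simp at h2
    omega
  have hCx : Cm *ᵥ x' = -w := by
    funext j
    have h0 : (M *ᵥ x) (Fin.natAdd d j) = 0 := by
      rw [hMx]
      exact Pi.single_eq_of_ne (hne j k) 1
    rw [mulVec, dotProduct, Fin.sum_univ_add] at h0
    have hlead : ∀ l : Fin d, M (Fin.natAdd d j) (Fin.castAdd m l) * x (Fin.castAdd m l)
        = B (Fin.natAdd d j) (Fin.castAdd m l) * x (Fin.castAdd m l) := by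
      intro l
      congr 1
      rw [hMdef, Matrix.add_apply, hD, Matrix.diagonal_apply_ne _ (hne j l), zero_add]
    rw [Finset.sum_congr rfl (fun l _ => hlead l)] at h0
    have htrail : ∀ l : Fin m, M (Fin.natAdd d j) (Fin.natAdd d l) * x (Fin.natAdd d l)
        = Cm j l * x' l := by
      intro l
      rw [hCdef, submatrix_apply, hx'def]
    rw [Finset.sum_congr rfl (fun l _ => htrail l)] at h0
    refine eq_neg_of_add_eq_zero_left ?_
    rw [add_comm]
    exact h0
  have hx'eq : x' = Cm⁻¹ *ᵥ (-w) := by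
    rw [← hCx, mulVec_mulVec, Matrix.nonsing_inv_mul _ hCunit, one_mulVec]
  set St : ℝ := ∑ l : Fin d, ‖x (Fin.castAdd m l)‖ with hStdef
  have hSt_nonneg : 0 ≤ St := Finset.sum_nonneg fun l _ => norm_nonneg _
  have hw_bound : ∀ j, ‖w j‖ ≤ K * St := by
    intro j
    rw [hwdef]
    calc ‖∑ l : Fin d, B (Fin.natAdd d j) (Fin.castAdd m l) * x (Fin.castAdd m l)‖
        ≤ ∑ l : Fin d, ‖B (Fin.natAdd d j) (Fin.castAdd m l) * x (Fin.castAdd m l)‖ :=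
          norm_sum_le _ _
      _ ≤ ∑ l : Fin d, K * ‖x (Fin.castAdd m l)‖ := Finset.sum_le_sum fun l _ => by
          rw [norm_mul]
          exact mul_le_mul_of_nonneg_right (hBK _ _) (norm_nonneg _)
      _ = K * St := by rw [hStdef, Finset.mul_sum]
  have hx'_bound : ∀ i, ‖x' i‖ ≤ ρ * St := by
    intro i
    have h1 : x' i = ∑ j, Cm⁻¹ i j * (-w) j := by
      rw [hx'eq]; rfl
    rw [h1]
    calc ‖∑ j, Cm⁻¹ i j * (-w) j‖ ≤ ∑ j, ‖Cm⁻¹ i j * (-w) j‖ := norm_sum_le _ _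
      _ ≤ ∑ _j : Fin m, (α/δ) * (K * St) := by
          refine Finset.sum_le_sum fun j _ => ?_
          rw [norm_mul, Pi.neg_apply, norm_neg]
          exact mul_le_mul (hCinv_entry i j) (hw_bound j) (norm_nonneg _) (by positivity)
      _ = m * ((α/δ) * (K * St)) := by rw [Finset.sum_const]; simp [nsmul_eq_mul]
      _ = ρ * St := by rw [hρdef]; ring
  have hSt_sq : St^2 ≤ d * Nt := by
    have := sq_sum_le_card_mul_sum_sq (s := (Finset.univ : Finset (Fin d)))
      (f := fun l => ‖x (Fin.castAdd m l)‖)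
    simpa [hStdef, hNtdef] using this
  have hN'_le : N' ≤ R * Nt := by
    have h1 : N' ≤ ∑ _j : Fin m, (ρ * St)^2 := by
      rw [hN'def]
      refine Finset.sum_le_sum fun j _ => ?_
      have h2 : ‖x (Fin.natAdd d j)‖ = ‖x' j‖ := rfl
      rw [h2]
      exact pow_le_pow_left₀ (norm_nonneg _) (hx'_bound j) 2
    have h2 : (∑ _j : Fin m, (ρ * St)^2 : ℝ) = m * (ρ^2 * St^2) := by
      rw [Finset.sum_const, Finset.card_univ, Fintype.card_fin, nsmul_eq_mul]; ring
    have h3 : (m : ℝ) * (ρ^2 * St^2) ≤ m * (ρ^2 * (d * Nt)) := by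
      refine mul_le_mul_of_nonneg_left ?_ (by positivity)
      exact mul_le_mul_of_nonneg_left hSt_sq (by positivity)
    rw [hRdef]
    calc N' ≤ m * (ρ^2 * St^2) := by rw [← h2]; exact h1
      _ ≤ m * (ρ^2 * (d * Nt)) := h3
      _ = d * m * ρ^2 * Nt := by ring
  have hNle : N ≤ (1+R) * Nt := by
    rw [hNsplit]; linarith only [hN'_le, hNt_nonneg, hR0]
  have hNt_le : Nt ≤ t := by
    have h1 : s₀⁻¹ * Nt ≤ t - rB := by linarith only [hE1, ht_eq]
    have h2 := (abs_le.mp hrB).1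
    have h3 : K * ((d:ℝ)+m) * N ≤ K * ((d:ℝ)+m) * ((1+R) * Nt) :=
      mul_le_mul_of_nonneg_left hNle (by positivity)
    have h4 : K * ((d:ℝ)+m) * ((1+R) * Nt) = γ * Nt := by rw [hγdef]; ring
    have h5 : (1 + K + γ) * Nt = Nt + K * Nt + γ * Nt := by ring
    have h6 : 0 ≤ K * Nt := mul_nonneg hK' hNt_nonneg
    rw [hs₀inv, h5] at h1
    linarith only [h1, h2, h3, h4, h6]
  have hN_le_t : N ≤ (1+R) * t := by
    calc N ≤ (1+R) * Nt := hNle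
      _ ≤ (1+R) * t := mul_le_mul_of_nonneg_left hNt_le (by positivity)
  have hupper : t ≤ C' * s k := by
    have h2 := (abs_le.mp hrB).1
    have h3 : K * ((d:ℝ)+m) * N ≤ K * ((d:ℝ)+m) * ((1+R) * t) :=
      mul_le_mul_of_nonneg_left hN_le_t (by positivity)
    have h3' : K * ((d:ℝ)+m) * ((1+R) * t) = γ * t := by rw [hγdef]; ring
    have h4 : (s k)⁻¹ * t^2 ≤ C' * t := by
      have h4' : C' * t = t + γ * t := by rw [hC'def]; ring
      linarith only [hE2, ht_eq, h2, h3, h3', h4']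
    have h5 : t * t ≤ (C' * s k) * t := by
      have h6 : (s k) * ((s k)⁻¹ * t^2) ≤ (s k) * (C' * t) :=
        mul_le_mul_of_nonneg_left h4 hsk_pos.le
      rw [← mul_assoc, mul_inv_cancel₀ hsk_pos.ne', one_mul] at h6
      calc t * t = t^2 := (pow_two t).symm
        _ ≤ s k * (C' * t) := h6
        _ = (C' * s k) * t := by ring
    exact le_of_mul_le_mul_right h5 ht_pos
  -- lower bound
  have hBkk_im : (B kk kk).im = 0 := by
    have h1 := congrFun (congrFun hB kk) kk
    rw [Matrix.conjTranspose_apply] at h1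
    exact Complex.conj_eq_iff_im.mp h1
  set a : ℝ := (s k)⁻¹ + (B kk kk).re with hadef
  have hBre_le : |(B kk kk).re| ≤ K := by
    refine (Complex.abs_re_le_norm _).trans ?_
    exact hBK kk kk
  have hK_le : K ≤ (s k)⁻¹ := by
    have h1 := hsinv k
    rw [hs₀inv] at h1
    linarith only [h1, hγ0]
  have ha_pos : 0 < a := by
    have h1 := (abs_le.mp hBre_le).1
    have h2 := hsinv k
    rw [hs₀inv] at h2
    rw [hadef]
    linarith only [h1, h2, hγ0]
  have ha_le : a ≤ 2 * (s k)⁻¹ := by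
    have h1 := (abs_le.mp hBre_le).2
    rw [hadef]
    linarith only [h1, hK_le]
  have hMkk : M kk kk = (a : ℂ) := by
    rw [hMdef, Matrix.add_apply, hD, Matrix.diagonal_apply_eq, hdv_dr, hdr_kk]
    apply Complex.ext
    · simp [hadef]
    · simp [hBkk_im]
  set e : Fin (d+m) → ℂ := Pi.single kk 1 with hedef
  have hstare : star e = e := by
    funext j
    simp [hedef, Pi.single_apply, apply_ite (star : ℂ → ℂ)]
  set b : ℂ := ((a⁻¹ : ℝ) : ℂ) with hbdef
  have hstarb : star b = b := by rw [hbdef]; exact Complex.conj_ofReal _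
  have hT1 : star x ⬝ᵥ (Pi.single kk 1 : Fin (d+m) → ℂ) = star (x kk) := by
    rw [dotProduct_single, mul_one]; rfl
  have hMe : M *ᵥ e = fun i => M i kk := by
    rw [hedef]; funext i; simp [mulVec_single]
  have hT2 : star x ⬝ᵥ (M *ᵥ e) = 1 := by
    have h1 : star (M *ᵥ x) = star x ᵥ* M := by
      rw [star_mulVec, hMH.eq]
    rw [dotProduct_mulVec, ← h1, hMx, hedef, dotProduct_single, mul_one, Pi.star_apply,
      Pi.single_eq_same, star_one]
  have hT3 : e ⬝ᵥ (Pi.single kk 1 : Fin (d+m) → ℂ) = 1 := by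
    rw [hedef, single_dotProduct, one_mul, Pi.single_eq_same]
  have hT4 : e ⬝ᵥ (M *ᵥ e) = (a : ℂ) := by
    rw [hMe, hedef, single_dotProduct, one_mul, hMkk]
  set z : Fin (d+m) → ℂ := x - b • e with hzdef
  have hkey : (star z ⬝ᵥ (M *ᵥ z)) = star (x kk) - b - b + b * b * (a : ℂ) := by
    rw [hzdef, star_sub, star_smul, hstarb, hstare, mulVec_sub, mulVec_smul, hMx]
    rw [sub_dotProduct, dotProduct_sub, dotProduct_sub, dotProduct_smul, dotProduct_smul,
      smul_dotProduct, smul_dotProduct]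
    rw [hT1, hT2, hT3, hT4]
    simp only [smul_eq_mul]
    ring
  have hzre : (star z ⬝ᵥ (M *ᵥ z)).re = t - a⁻¹ := by
    rw [hkey]
    have h1 : b * b * (a : ℂ) = ((a⁻¹ : ℝ) : ℂ) := by
      rw [hbdef]
      push_cast
      field_simp
    rw [h1]
    simp only [Complex.add_re, Complex.sub_re, Complex.ofReal_re, hbdef]
    have h2 : (star (x kk)).re = t := by
      rw [hxkk, htdef]
      simp
    rw [h2]
    ring
  have hlow0 : 0 ≤ t - a⁻¹ := by
    rw [← hzre]
    have := hPD.posSemidef.re_dotProduct_nonneg z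
    simpa using this
  have hlower : 1/2 * s k ≤ t := by
    have h1 : (2 * (s k)⁻¹)⁻¹ ≤ a⁻¹ := inv_anti₀ ha_pos ha_le
    have h2 : (2 * (s k)⁻¹)⁻¹ = s k / 2 := by
      field_simp
    linarith only [h1, h2, hlow0]
  exact ⟨by linarith only [hlower], hupper⟩
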